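/- For every k ≥ 1, every γ ∈ (0,1], every h ∈ Δ_k, and every index b ∈ {1,…,k}, there exists a scalar p ∈ [0,1] such that p · ((2 h · e_b − 1)/γ − 1) ≤ 2(Π(h/γ) · e_b − 1). -/

import Mathlib

open scoped BigOperators

/-- The probability simplex in `ℝ^k`. -/
def simplex (k : ℕ) : Set (EuclideanSpace ℝ (Fin k)) :=
  {p | (∀ i, 0 ≤ p i) ∧ ∑ i, p i = 1}

/-- `q` is the Euclidean (L2) metric projection of `x` onto the probability simplex. -/
def IsL2ProjOnSimplex (k : ℕ) (x q : EuclideanSpace ℝ (Fin k)) : Prop :=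
  q ∈ simplex k ∧ ∀ r ∈ simplex k, ‖q - x‖ ≤ ‖r - x‖

lemma norm_sq_sum' (k : ℕ) (v : EuclideanSpace ℝ (Fin k)) : ‖v‖ ^ 2 = ∑ i, (v i) ^ 2 := by
  rw [EuclideanSpace.norm_eq, Real.sq_sqrt (by positivity)]
  simp [Real.norm_eq_abs, sq_abs]

/-- Variational inequality: if `q` is the projection of `x` onto the simplex and `q j > 0`,
then for every `l`, `x l - q l ≤ x j - q j`. -/
lemma vi_lemma (k : ℕ) (x q : EuclideanSpace ℝ (Fin k)) (hq : IsL2ProjOnSimplex k x q)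
    (j l : Fin k) (hqj : 0 < q j) : x l - q l ≤ x j - q j := by
  by_cases hlj : l = j
  · subst hlj; exact le_rfl
  obtain ⟨⟨hqpos, hqsum⟩, hmin⟩ := hq
  -- key inequality for each small t > 0
  have key : ∀ t : ℝ, 0 < t → t ≤ q j →
      0 ≤ 2 * t * ((q l - x l) - (q j - x j)) + 2 * t ^ 2 := by
    intro t ht htj
    let r : EuclideanSpace ℝ (Fin k) :=
      WithLp.toLp 2 (fun i => q i + (if i = l then t else 0) - (if i = j then t else 0))
    have hrapp : ∀ i, r i = q i + (if i = l then t else 0) - (if i = j then t else 0) :=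
      fun i => rfl
    have hrS : r ∈ simplex k := by
      constructor
      · intro i
        by_cases h1 : i = l
        · subst h1; rw [hrapp]
          simp [hlj]
          have := hqpos i; linarith
        · by_cases h2 : i = j
          · subst h2; rw [hrapp]
            have h3 : ¬ (i = l) := h1
            simp [h3]
            linarith
          · rw [hrapp]; simp [h1, h2]; exact hqpos i
      · have : ∑ i, r i = (∑ i, q i) + (∑ i, if i = l then t else 0)
            - (∑ i, if i = j then t else 0) := by
          simp only [hrapp, Finset.sum_sub_distrib, Finset.sum_add_distrib]
        rw [this, hqsum, Finset.sum_ite_eq' Finset.univ l fun _ => t,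
          Finset.sum_ite_eq' Finset.univ j fun _ => t]
        simp
    have hnorm := hmin r hrS
    have hsq : ∑ i, (q i - x i) ^ 2 ≤ ∑ i, (r i - x i) ^ 2 := by
      have h1 : ‖q - x‖ ^ 2 ≤ ‖r - x‖ ^ 2 := by
        exact pow_le_pow_left₀ (norm_nonneg _) hnorm 2
      rw [norm_sq_sum', norm_sq_sum'] at h1
      simpa using h1
    have hterm : ∀ i, (r i - x i) ^ 2 - (q i - x i) ^ 2 =
        (if i = l then 2 * t * (q l - x l) + t ^ 2 else 0) +
        (if i = j then -(2 * t * (q j - x j)) + t ^ 2 else 0) := by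
      intro i
      by_cases h1 : i = l
      · subst h1
        have h2 : ¬ (i = j) := hlj
        rw [hrapp]
        simp [h2]
        ring
      · by_cases h2 : i = j
        · subst h2
          rw [hrapp]
          simp [h1]
          ring
        · rw [hrapp]; simp [h1, h2]
    have hdiff : ∑ i, (r i - x i) ^ 2 - ∑ i, (q i - x i) ^ 2 =
        2 * t * ((q l - x l) - (q j - x j)) + 2 * t ^ 2 := by
      rw [← Finset.sum_sub_distrib]
      rw [Finset.sum_congr rfl fun i _ => hterm i]
      rw [Finset.sum_add_distrib, Finset.sum_ite_eq' Finset.univ l,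
        Finset.sum_ite_eq' Finset.univ j]
      simp; ring
    linarith
  -- conclude by taking t small
  by_contra hcon
  push_neg at hcon
  set A : ℝ := (q l - x l) - (q j - x j) with hA
  have hAneg : A < 0 := by simp [hA]; linarith
  have ht0 : 0 < min (q j) (-A / 2) := lt_min hqj (by linarith)
  have := key (min (q j) (-A / 2)) ht0 (min_le_left _ _)
  have hle : min (q j) (-A / 2) ≤ -A / 2 := min_le_right _ _
  nlinarith [ht0, hle, this]

/-- for every `k ≥ 1`, `γ ∈ (0,1]`, `h ∈ Δ_k` and `b ∈ [k]`, there exists a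
scalar `p ∈ [0,1]` with `p · ((2 h·e_b − 1)/γ − 1) ≤ 2(Π(h/γ) · e_b − 1)`.
(Note `h · e_b = h b` and `Π(h/γ) · e_b = Π(h/γ) b`.) -/
theorem stmt_3 (k : ℕ) (hk : 1 ≤ k) (γ : ℝ) (hγ : γ ∈ Set.Ioc (0 : ℝ) 1)
    (h : EuclideanSpace ℝ (Fin k)) (hh : h ∈ simplex k) (b : Fin k)
    (q : EuclideanSpace ℝ (Fin k)) (hq : IsL2ProjOnSimplex k (γ⁻¹ • h) q) :
    ∃ p ∈ Set.Icc (0 : ℝ) 1, p * ((2 * h b - 1) / γ - 1) ≤ 2 * (q b - 1) := by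
  obtain ⟨hγ0, hγ1⟩ := hγ
  obtain ⟨hhpos, hhsum⟩ := hh
  obtain ⟨⟨hqpos, hqsum⟩, hq2⟩ := hq
  set x : EuclideanSpace ℝ (Fin k) := γ⁻¹ • h with hx
  have hxapp : ∀ i, x i = γ⁻¹ * h i := fun i => rfl
  by_cases hb1 : q b = 1
  · exact ⟨0, ⟨le_rfl, zero_le_one⟩, by rw [hb1]; simp⟩
  · -- q b < 1, find j ≠ b with q j > 0
    have hqb_le : q b ≤ 1 := by
      rw [← hqsum]
      exact Finset.single_le_sum (fun i _ => hqpos i) (Finset.mem_univ b)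
    have hqb_lt : q b < 1 := lt_of_le_of_ne hqb_le hb1
    have hj : ∃ j, j ≠ b ∧ 0 < q j := by
      by_contra hcon
      push_neg at hcon
      have hzero : ∀ i ∈ Finset.univ, i ≠ b → q i = 0 := by
        intro i _ hib
        exact le_antisymm (hcon i hib) (hqpos i)
      have := Finset.sum_eq_single b hzero (fun hb => absurd (Finset.mem_univ b) hb)
      rw [hqsum] at this
      exact hb1 this.symm
    obtain ⟨j, hjb, hqj⟩ := hj
    refine ⟨1, ⟨zero_le_one, le_rfl⟩, ?_⟩
    -- suffices: 2 * (x b - q b) ≤ 1/γ - 1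
    have hmain : 2 * (x b - q b) ≤ γ⁻¹ - 1 := by
      by_cases hpos : x b - q b ≤ 0
      · have h1γ : (1:ℝ) ≤ γ⁻¹ := by
          have hγinv : γ⁻¹ * γ = 1 := inv_mul_cancel₀ (ne_of_gt hγ0)
          nlinarith [inv_pos.mpr hγ0]
        linarith
      · push_neg at hpos
        have hsum_eq : ∑ i, (x i - q i) = γ⁻¹ - 1 := by
          rw [Finset.sum_sub_distrib, hqsum]
          have : ∑ i, x i = γ⁻¹ := by
            simp only [hxapp, ← Finset.mul_sum, hhsum, mul_one]
          rw [this]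
        have hsub : ({b, j} : Finset (Fin k)) ⊆ Finset.univ := Finset.subset_univ _
        have hsplit := Finset.sum_sdiff (f := fun i => x i - q i) hsub
        have hpair : ∑ i ∈ ({b, j} : Finset (Fin k)), (x i - q i)
            = (x b - q b) + (x j - q j) := Finset.sum_pair (Ne.symm hjb)
        have hrest : 0 ≤ ∑ i ∈ Finset.univ \ ({b, j} : Finset (Fin k)), (x i - q i) := by
          apply Finset.sum_nonneg
          intro i hi
          simp only [Finset.mem_sdiff, Finset.mem_insert, Finset.mem_singleton] at hi
          push_neg at hi
          obtain ⟨-, hib, hij⟩ := hi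
          rcases eq_or_lt_of_le (hqpos i) with hq0 | hq0
          · rw [← hq0, sub_zero]
            rw [hxapp]
            exact mul_nonneg (inv_nonneg.mpr hγ0.le) (hhpos i)
          · have := vi_lemma k x q ⟨⟨hqpos, hqsum⟩, hq2⟩ i b hq0
            linarith
        have hvij := vi_lemma k x q ⟨⟨hqpos, hqsum⟩, hq2⟩ j b hqj
        linarith [hsplit, hpair, hrest, hsum_eq, hvij]
    have hγinv : γ⁻¹ * γ = 1 := inv_mul_cancel₀ (ne_of_gt hγ0)
    rw [hxapp] at hmain
    rw [one_mul, div_sub_one (ne_of_gt hγ0), div_le_iff₀ hγ0]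
    nlinarith [mul_le_mul_of_nonneg_right hmain (le_of_lt hγ0), hγinv, hhpos b]
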